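/- Define g(θ) = (1/2)·sin(θ/2)·sin θ and h(θ) = e^{−g(θ)}·(cos θ + sin θ) for θ ∈ ℝ. Then h(0) = 1, the first derivative of h at 0 equals 1, the second derivative of h at 0 equals −3/2, and the third derivative of h at 0 equals −5/2. -/

import Mathlib

open Real

noncomputable section MoebiusAux

private def G : ℝ → ℝ := fun θ => (1/2 : ℝ) * Real.sin (θ / 2) * Real.sin θ
private def GP : ℝ → ℝ := fun θ =>
  (1/4 : ℝ) * Real.cos (θ/2) * Real.sin θ + (1/2) * Real.sin (θ/2) * Real.cos θ
private def GPP : ℝ → ℝ := fun θ =>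
  (1/2 : ℝ) * Real.cos (θ/2) * Real.cos θ - (5/8) * Real.sin (θ/2) * Real.sin θ
private def H : ℝ → ℝ := fun θ => Real.exp (-G θ) * (Real.cos θ + Real.sin θ)
private def H1 : ℝ → ℝ := fun θ =>
  Real.exp (-G θ) * ((Real.cos θ - Real.sin θ) - GP θ * (Real.cos θ + Real.sin θ))
private def H2 : ℝ → ℝ := fun θ =>
  Real.exp (-G θ) * ((GP θ)^2 * (Real.cos θ + Real.sin θ)
    - GPP θ * (Real.cos θ + Real.sin θ)
    - 2 * GP θ * (Real.cos θ - Real.sin θ) - (Real.cos θ + Real.sin θ))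

private lemma hasDerivAt_half (θ : ℝ) :
    HasDerivAt (fun x : ℝ => Real.sin (x/2)) (Real.cos (θ/2) * (1/2)) θ :=
  ((hasDerivAt_id θ).div_const 2).sin

private lemma hasDerivAt_halfcos (θ : ℝ) :
    HasDerivAt (fun x : ℝ => Real.cos (x/2)) (-Real.sin (θ/2) * (1/2)) θ :=
  ((hasDerivAt_id θ).div_const 2).cos

private lemma hasDerivAt_G (θ : ℝ) : HasDerivAt G (GP θ) θ := by
  have h := (((hasDerivAt_half θ).const_mul (1/2 : ℝ)).mul (Real.hasDerivAt_sin θ))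
  refine h.congr_deriv ?_
  simp only [GP]; ring

private lemma hasDerivAt_GP (θ : ℝ) : HasDerivAt GP (GPP θ) θ := by
  have h := (((hasDerivAt_halfcos θ).const_mul (1/4 : ℝ)).mul (Real.hasDerivAt_sin θ)).add
    (((hasDerivAt_half θ).const_mul (1/2 : ℝ)).mul (Real.hasDerivAt_cos θ))
  refine h.congr_deriv ?_
  simp only [GPP]; ring

private lemma hasDerivAt_E (θ : ℝ) :
    HasDerivAt (fun x : ℝ => Real.exp (-G x)) (Real.exp (-G θ) * (-GP θ)) θ :=
  (hasDerivAt_G θ).neg.exp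

private lemma hasDerivAt_H (θ : ℝ) : HasDerivAt H (H1 θ) θ := by
  have h := (hasDerivAt_E θ).mul ((Real.hasDerivAt_cos θ).add (Real.hasDerivAt_sin θ))
  refine h.congr_deriv ?_
  simp only [H1, Pi.add_apply, Pi.sub_apply, Pi.mul_apply]; ring

private lemma hasDerivAt_H1 (θ : ℝ) : HasDerivAt H1 (H2 θ) θ := by
  have h := (hasDerivAt_E θ).mul
    (((Real.hasDerivAt_cos θ).sub (Real.hasDerivAt_sin θ)).sub
      ((hasDerivAt_GP θ).mul ((Real.hasDerivAt_cos θ).add (Real.hasDerivAt_sin θ))))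
  refine h.congr_deriv ?_
  simp only [H2, Pi.add_apply, Pi.sub_apply, Pi.mul_apply]; ring

private lemma hasDerivAt_H2_zero : HasDerivAt H2 (-5/2 : ℝ) 0 := by
  have h := (hasDerivAt_E 0).mul
    (((((hasDerivAt_GP 0).mul (hasDerivAt_GP 0)).mul
        ((Real.hasDerivAt_cos 0).add (Real.hasDerivAt_sin 0))).sub
      (((((hasDerivAt_halfcos 0).const_mul (1/2 : ℝ)).mul (Real.hasDerivAt_cos 0)).sub
        (((hasDerivAt_half 0).const_mul (5/8 : ℝ)).mul (Real.hasDerivAt_sin 0))).mul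
        ((Real.hasDerivAt_cos 0).add (Real.hasDerivAt_sin 0)))).sub
      ((((hasDerivAt_GP 0).const_mul (2 : ℝ)).mul
        ((Real.hasDerivAt_cos 0).sub (Real.hasDerivAt_sin 0))).add
        ((Real.hasDerivAt_cos 0).add (Real.hasDerivAt_sin 0))))
  have hfun : H2 = fun θ =>
      Real.exp (-G θ) * ((GP θ * GP θ) * (Real.cos θ + Real.sin θ)
        - ((1/2 : ℝ) * Real.cos (θ/2) * Real.cos θ - (5/8) * Real.sin (θ/2) * Real.sin θ)
            * (Real.cos θ + Real.sin θ)
        - (2 * GP θ * (Real.cos θ - Real.sin θ) + (Real.cos θ + Real.sin θ))) := by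
    funext θ; simp only [H2, GPP]; ring
  rw [hfun]
  refine h.congr_deriv ?_
  simp [G, GP, GPP]
  norm_num

theorem moebius_taylor_candidate_g :
    let g : ℝ → ℝ := fun θ => (1/2 : ℝ) * Real.sin (θ / 2) * Real.sin θ
    let h : ℝ → ℝ := fun θ => Real.exp (-g θ) * (Real.cos θ + Real.sin θ)
    h 0 = 1 ∧ deriv h 0 = 1 ∧ iteratedDeriv 2 h 0 = -3/2 ∧
      iteratedDeriv 3 h 0 = -5/2 := by
  intro g h
  have hgH : h = H := rfl
  have hd1 : deriv h = H1 := by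
    rw [hgH]; funext θ; exact (hasDerivAt_H θ).deriv
  have hd2 : deriv (deriv h) = H2 := by
    rw [hd1]; funext θ; exact (hasDerivAt_H1 θ).deriv
  refine ⟨by simp [h, g], ?_, ?_, ?_⟩
  · rw [hd1]; simp [H1, G, GP]
  · rw [iteratedDeriv_succ, iteratedDeriv_one, hd2]
    simp [H2, G, GP, GPP]; norm_num
  · rw [iteratedDeriv_succ, iteratedDeriv_succ, iteratedDeriv_one, hd2]
    exact hasDerivAt_H2_zero.deriv

end MoebiusAux
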